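/- Summing the double series first over m: for complex numbers q, x_1,…,x_M, y_1,…,y_N, a_1,…,a_M, b_1,…,b_N with |q| < 1, |x_i| < 1 and |y_j| < 1 for all i, j, such that (a_i x_i ; q)_n ≠ 0 for all i and all n ∈ ℕ, (x_i ; q)_∞ ≠ 0 for all i, and such that the doubly-indexed family (m,n) ∈ ℕ^M × ℕ^N ↦ ∏_{i=1}^M ((a_i;q)_{m_i}/(q;q)_{m_i}) x_i^{m_i} · ∏_{j=1}^N ((b_j;q)_{n_j}/(q;q)_{n_j}) y_j^{n_j} · q^{|m||n|} is absolutely summable, its sum S equals ∏_{i=1}^M ((a_i x_i;q)_∞/(x_i;q)_∞) · F_{M,N}({x_i},{b_j};{a_i x_i};{y_j}), where in this F the upper parameters are x_1,…,x_M, the b-type parameters are b_1,…,b_N, the lower parameters are a_1 x_1,…,a_M x_M, and the variables are y_1,…,y_N. -/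

import Mathlib

open scoped BigOperators

noncomputable def qPoch (q a : ℂ) (n : ℕ) : ℂ :=
  ∏ k ∈ Finset.range n, (1 - q ^ k * a)

noncomputable def qPochInf (q a : ℂ) : ℂ :=
  ∏' k : ℕ, (1 - q ^ k * a)

/-- The generalized `q`-hypergeometric series `F_{N,M}` with upper parameters `a`,
`b`-type parameters `b`, lower parameters `c` and variables `y`. -/
noncomputable def qHyperF (q : ℂ) {N M : ℕ} (a : Fin N → ℂ) (b : Fin M → ℂ)
    (c : Fin N → ℂ) (y : Fin M → ℂ) : ℂ :=
  ∑' m : Fin M → ℕ,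
    (∏ j, qPoch q (a j) (∑ i, m i) / qPoch q (c j) (∑ i, m i)) *
      (∏ i, qPoch q (b i) (m i) / qPoch q q (m i)) * ∏ i, y i ^ m i

open Filter

/-! ### Auxiliary lemmas -/

lemma one_sub_ne {w : ℂ} (hw : ‖w‖ < 1) : (1 : ℂ) - w ≠ 0 := by
  intro h
  have : w = 1 := by linear_combination -h
  simp [this] at hw

lemma qPoch_succ (q a : ℂ) (n : ℕ) : qPoch q a (n + 1) = qPoch q a n * (1 - q ^ n * a) := by
  simp [qPoch, Finset.prod_range_succ]

lemma abs_qpow_mul_lt {q c : ℂ} (hq : ‖q‖ < 1) (hc : ‖c‖ < 1) (k : ℕ) :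
    ‖(q ^ k * c)‖ < 1 := by
  rw [norm_mul, norm_pow]
  calc ‖q‖ ^ k * ‖c‖ ≤ 1 * ‖c‖ := by
        apply mul_le_mul_of_nonneg_right (pow_le_one₀ (norm_nonneg q) hq.le)
          (norm_nonneg c)
    _ < 1 := by simpa using hc

lemma abs_mul_lt_one_left {q z : ℂ} (hq : ‖q‖ < 1) (hz : ‖z‖ < 1) :
    ‖(q * z)‖ < 1 := by
  rw [norm_mul]
  calc ‖q‖ * ‖z‖ ≤ 1 * ‖z‖ :=
        mul_le_mul_of_nonneg_right hq.le (norm_nonneg z)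
    _ < 1 := by simpa using hz

lemma qPoch_q_ne {q : ℂ} (hq : ‖q‖ < 1) (n : ℕ) : qPoch q q n ≠ 0 :=
  Finset.prod_ne_zero_iff.2 fun k _ => one_sub_ne (abs_qpow_mul_lt hq hq k)

lemma qPoch_ne_of_abs_lt {q c : ℂ} (hq : ‖q‖ < 1) (hc : ‖c‖ < 1) (n : ℕ) :
    qPoch q c n ≠ 0 :=
  Finset.prod_ne_zero_iff.2 fun k _ => one_sub_ne (abs_qpow_mul_lt hq hc k)

lemma factor_ne {q c : ℂ} (h : ∀ n, qPoch q c n ≠ 0) (k : ℕ) : (1 : ℂ) - q ^ k * c ≠ 0 := by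
  intro h0
  exact h (k + 1) (by rw [qPoch_succ, h0, mul_zero])

/-! ### Summability of the `q`-binomial series -/

lemma coeff_rec {q : ℂ} (hq : ‖q‖ < 1) (a z : ℂ) (k : ℕ) :
    qPoch q a (k + 1) / qPoch q q (k + 1) * z ^ (k + 1)
      = qPoch q a k / qPoch q q k * z ^ k * ((1 - q ^ k * a) * z / (1 - q ^ (k + 1))) := by
  have h1 : qPoch q q k ≠ 0 := qPoch_q_ne hq k
  have h2 : (1 : ℂ) - q ^ (k + 1) ≠ 0 := by
    apply one_sub_ne
    simpa [map_pow] using pow_lt_one₀ (norm_nonneg q) hq (Nat.succ_ne_zero k)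
  rw [qPoch_succ, qPoch_succ]
  have : (1 : ℂ) - q ^ k * q = 1 - q ^ (k + 1) := by ring
  rw [this]
  field_simp
  ring

lemma qbin_summable {q : ℂ} (hq : ‖q‖ < 1) (a : ℂ) {z : ℂ}
    (hz : ‖z‖ < 1) :
    Summable (fun k => ‖qPoch q a k / qPoch q q k * z ^ k‖) := by
  set f : ℕ → ℂ := fun k => qPoch q a k / qPoch q q k * z ^ k with hf
  set r : ℝ := (1 + ‖z‖) / 2 with hr
  have hr1 : r < 1 := by rw [hr]; linarith
  apply summable_of_ratio_norm_eventually_le (f := fun k => ‖f k‖) hr1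
  have htq : Tendsto (fun k : ℕ => q ^ k) atTop (nhds 0) :=
    tendsto_pow_atTop_nhds_zero_of_norm_lt_one hq
  have ht : Tendsto (fun k : ℕ => ‖((1 - q ^ k * a) * z / (1 - q ^ (k + 1)))‖)
      atTop (nhds (‖z‖)) := by
    have h1 : Tendsto (fun k : ℕ => (1 - q ^ k * a) * z / (1 - q ^ (k + 1))) atTop
        (nhds z) := by
      have : Tendsto (fun k : ℕ => (1 - q ^ k * a) * z / (1 - q ^ (k + 1))) atTop
          (nhds ((1 - 0 * a) * z / (1 - 0))) := by
        apply Tendsto.div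
        · exact ((tendsto_const_nhds.sub (htq.mul_const a)).mul_const z)
        · exact tendsto_const_nhds.sub (htq.comp (tendsto_add_atTop_nat 1))
        · simp
      simpa using this
    exact (continuous_norm.tendsto z).comp h1
  have hev : ∀ᶠ k in atTop,
      ‖((1 - q ^ k * a) * z / (1 - q ^ (k + 1)))‖ ≤ r :=
    ht.eventually_le_const (by rw [hr]; linarith)
  filter_upwards [hev] with k hk
  rw [hf]
  simp only [norm_norm]
  rw [coeff_rec hq a z k, norm_mul]
  calc ‖qPoch q a k / qPoch q q k * z ^ k‖ * ‖(1 - q ^ k * a) * z / (1 - q ^ (k + 1))‖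
      ≤ ‖qPoch q a k / qPoch q q k * z ^ k‖ * r :=
        mul_le_mul_of_nonneg_left hk (norm_nonneg _)
    _ = r * ‖qPoch q a k / qPoch q q k * z ^ k‖ := mul_comm _ _

/-! ### Infinite product facts -/

lemma summable_log_qfac {q c : ℂ} (hq : ‖q‖ < 1) :
    Summable (fun k : ℕ => Complex.log (1 - q ^ k * c)) := by
  apply Summable.of_norm_bounded_eventually_nat
    (g := fun k => 3 / 2 * (‖c‖ * ‖q‖ ^ k))
  · have h0 : Summable (fun k : ℕ => ‖q‖ ^ k) :=
      summable_geometric_of_lt_one (norm_nonneg q) hq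
    exact (h0.mul_left (‖c‖)).mul_left (3 / 2)
  · have htq : Tendsto (fun k : ℕ => ‖q ^ k * c‖) atTop (nhds 0) := by
      have h1 : Tendsto (fun k : ℕ => q ^ k * c) atTop (nhds 0) := by
        simpa using (tendsto_pow_atTop_nhds_zero_of_norm_lt_one hq).mul_const c
      simpa using h1.norm
    filter_upwards [htq.eventually_le_const (by norm_num : (0:ℝ) < 1/2)] with k hk
    have h1 : (1 : ℂ) - q ^ k * c = 1 + -(q ^ k * c) := by ring
    rw [h1]
    have := Complex.norm_log_one_add_half_le_self (z := -(q ^ k * c))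
      (by simpa using hk)
    refine this.trans ?_
    simp only [norm_neg]
    rw [show ‖q ^ k * c‖ = ‖c‖ * ‖q‖ ^ k by
      rw [norm_mul, norm_pow]; ring]

lemma multipliable_qfac {q c : ℂ} (hq : ‖q‖ < 1)
    (hne : ∀ k : ℕ, (1 : ℂ) - q ^ k * c ≠ 0) :
    Multipliable (fun k : ℕ => 1 - q ^ k * c) :=
  Complex.multipliable_of_summable_log (summable_log_qfac hq)

lemma qPochInf_ne {q c : ℂ} (hq : ‖q‖ < 1)
    (hne : ∀ k : ℕ, (1 : ℂ) - q ^ k * c ≠ 0) : qPochInf q c ≠ 0 := by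
  have := Complex.cexp_tsum_eq_tprod (f := fun k => 1 - q ^ k * c)
    (fun k => hne k) (summable_log_qfac hq)
  rw [qPochInf, ← this]
  exact Complex.exp_ne_zero _

lemma qPochInf_split {q c : ℂ} (hq : ‖q‖ < 1)
    (hne : ∀ k : ℕ, (1 : ℂ) - q ^ k * c ≠ 0) (n : ℕ) :
    qPochInf q c = qPoch q c n * qPochInf q (q ^ n * c) := by
  have hkey : ∀ k : ℕ, (1 : ℂ) - q ^ k * (q ^ n * c) = 1 - q ^ (k + n) * c := by
    intro k; rw [pow_add]; ring
  have hm2 : Multipliable (fun k : ℕ => (1 : ℂ) - q ^ k * (q ^ n * c)) :=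
    multipliable_qfac hq (fun k => by rw [hkey k]; exact hne (k + n))
  have hm2' : Multipliable (fun k : ℕ => (1 : ℂ) - q ^ (k + n) * c) :=
    hm2.congr hkey
  have := Multipliable.prod_mul_tprod_nat_mul' (f := fun k : ℕ => (1 : ℂ) - q ^ k * c) (k := n) hm2'
  rw [qPochInf, ← this, qPoch, qPochInf]
  congr 1
  exact (tprod_congr hkey).symm

/-! ### The functional equation and the `q`-binomial theorem -/

lemma funceq {q : ℂ} (hq : ‖q‖ < 1) (a : ℂ) {z : ℂ} (hz : ‖z‖ < 1) :
    (1 - z) * ∑' k : ℕ, qPoch q a k / qPoch q q k * z ^ k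
      = (1 - a * z) * ∑' k : ℕ, qPoch q a k / qPoch q q k * (q * z) ^ k := by
  set c : ℕ → ℂ := fun k => qPoch q a k / qPoch q q k with hc
  have hqz : ‖(q * z)‖ < 1 := abs_mul_lt_one_left hq hz
  have hS : Summable (fun k : ℕ => c k * z ^ k) := (qbin_summable hq a hz).of_norm
  have hSq : Summable (fun k : ℕ => c k * (q * z) ^ k) := (qbin_summable hq a hqz).of_norm
  set t : ℕ → ℂ := fun k => c k * z ^ k - c k * (q * z) ^ k with ht
  have hT : Summable t := hS.sub hSq
  have ht0 : t 0 = 0 := by simp [ht]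
  have hcrec : ∀ k : ℕ, c (k + 1) * (1 - q ^ (k + 1)) = c k * (1 - q ^ k * a) := by
    intro k
    have h1 : qPoch q q k ≠ 0 := qPoch_q_ne hq k
    have h1' : qPoch q q (k + 1) ≠ 0 := qPoch_q_ne hq (k + 1)
    have h2 : (1 : ℂ) - q ^ k * q ≠ 0 := by
      have := qPoch_succ q q k
      intro hz0
      exact h1' (by rw [this, hz0, mul_zero])
    rw [hc]
    simp only
    rw [qPoch_succ, qPoch_succ]
    field_simp
    ring
  have hstep : ∀ k : ℕ, t (k + 1) = z * (c k * z ^ k) - a * z * (c k * (q * z) ^ k) := by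
    intro k
    have e1 : t (k + 1) = c (k + 1) * (1 - q ^ (k + 1)) * z ^ (k + 1) := by
      rw [ht]; simp only [mul_pow]; ring
    rw [e1, hcrec k, mul_pow]
    ring
  have lhs : (1 - z) * ∑' k : ℕ, c k * z ^ k
      = ∑' k : ℕ, (c k * z ^ k - z * (c k * z ^ k)) := by
    rw [one_sub_mul, ← tsum_mul_left, ← Summable.tsum_sub hS (hS.mul_left z)]
  have rhs : (1 - a * z) * ∑' k : ℕ, c k * (q * z) ^ k
      = ∑' k : ℕ, (c k * (q * z) ^ k - a * z * (c k * (q * z) ^ k)) := by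
    rw [one_sub_mul, ← tsum_mul_left, ← Summable.tsum_sub hSq (hSq.mul_left (a * z))]
  rw [lhs, rhs]
  have hu : Summable (fun k : ℕ => c k * z ^ k - z * (c k * z ^ k)) :=
    hS.sub (hS.mul_left z)
  have hv : Summable (fun k : ℕ => c k * (q * z) ^ k - a * z * (c k * (q * z) ^ k)) :=
    hSq.sub (hSq.mul_left (a * z))
  have hT1 : Summable (fun k : ℕ => t (k + 1)) := (summable_nat_add_iff 1).2 hT
  rw [← sub_eq_zero, ← Summable.tsum_sub hu hv]
  have : ∀ k : ℕ, (c k * z ^ k - z * (c k * z ^ k))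
      - (c k * (q * z) ^ k - a * z * (c k * (q * z) ^ k)) = t k - t (k + 1) := by
    intro k
    rw [hstep k, ht]
    simp only
    ring
  rw [tsum_congr this, Summable.tsum_sub hT hT1, Summable.tsum_eq_zero_add hT, ht0]
  ring

theorem qbinom {q : ℂ} (hq : ‖q‖ < 1) (a : ℂ) {z : ℂ} (hz : ‖z‖ < 1)
    (hne : ∀ k : ℕ, (1 : ℂ) - q ^ k * (a * z) ≠ 0) :
    ∑' k : ℕ, qPoch q a k / qPoch q q k * z ^ k = qPochInf q (a * z) / qPochInf q z := by
  set c : ℕ → ℂ := fun k => qPoch q a k / qPoch q q k with hc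
  set S : ℂ → ℂ := fun w => ∑' k : ℕ, c k * w ^ k with hSdef
  have habs : ∀ n : ℕ, ‖(q ^ n * z)‖ < 1 := fun n => abs_qpow_mul_lt hq hz n
  have hiter : ∀ n : ℕ, S z * qPoch q z n = qPoch q (a * z) n * S (q ^ n * z) := by
    intro n
    induction n with
    | zero => simp [qPoch]
    | succ n ih =>
      have hfe := funceq hq a (habs n)
      have hb : q * (q ^ n * z) = q ^ (n + 1) * z := by ring
      have hb2 : a * (q ^ n * z) = q ^ n * (a * z) := by ring
      rw [hb, hb2] at hfe
      have hfe' : (1 - q ^ n * z) * S (q ^ n * z)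
          = (1 - q ^ n * (a * z)) * S (q ^ (n + 1) * z) := hfe
      rw [qPoch_succ, qPoch_succ, ← mul_assoc, ih, mul_assoc, mul_comm (S (q ^ n * z)), hfe']
      ring
  have hlim : Tendsto (fun n : ℕ => S (q ^ n * z)) atTop (nhds 1) := by
    have key : Tendsto (fun n : ℕ => S (q ^ n * z)) atTop (nhds (∑' k : ℕ, c k * 0 ^ k)) := by
      rw [hSdef]
      apply tendsto_tsum_of_dominated_convergence (bound := fun k => ‖c k * z ^ k‖)
      · exact qbin_summable hq a hz
      · intro k
        have h1 : Tendsto (fun n : ℕ => q ^ n * z) atTop (nhds 0) := by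
          simpa using (tendsto_pow_atTop_nhds_zero_of_norm_lt_one hq).mul_const z
        exact (((continuous_pow k).tendsto 0).comp h1).const_mul (c k)
      · filter_upwards with n k
        rw [norm_mul, norm_mul]
        apply mul_le_mul_of_nonneg_left _ (norm_nonneg _)
        rw [norm_pow, norm_pow]
        apply pow_le_pow_left₀ (norm_nonneg _)
        calc ‖q ^ n * z‖ = ‖q‖ ^ n * ‖z‖ := by rw [norm_mul, norm_pow]
          _ ≤ 1 * ‖z‖ := mul_le_mul_of_nonneg_right
              (pow_le_one₀ (norm_nonneg q) hq.le) (norm_nonneg z)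
          _ = ‖z‖ := one_mul _
    have h1 : (∑' k : ℕ, c k * 0 ^ k) = 1 := by
      rw [tsum_eq_single 0]
      · simp [hc, qPoch]
      · intro k hk
        simp [zero_pow hk]
    rwa [h1] at key
  have hmz : Multipliable (fun k : ℕ => (1 : ℂ) - q ^ k * z) :=
    multipliable_qfac hq (fun k => one_sub_ne (abs_qpow_mul_lt hq hz k))
  have hmaz : Multipliable (fun k : ℕ => (1 : ℂ) - q ^ k * (a * z)) :=
    multipliable_qfac hq hne
  have hL : Tendsto (fun n : ℕ => S z * qPoch q z n) atTop (nhds (S z * qPochInf q z)) :=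
    (hmz.hasProd.tendsto_prod_nat).const_mul (S z)
  have hR : Tendsto (fun n : ℕ => qPoch q (a * z) n * S (q ^ n * z)) atTop
      (nhds (qPochInf q (a * z) * 1)) :=
    (hmaz.hasProd.tendsto_prod_nat).mul hlim
  have heq : S z * qPochInf q z = qPochInf q (a * z) * 1 :=
    tendsto_nhds_unique (hL.congr (fun n => hiter n)) hR
  have hz0 : qPochInf q z ≠ 0 :=
    qPochInf_ne hq (fun k => one_sub_ne (abs_qpow_mul_lt hq hz k))
  rw [mul_one] at heq
  have : S z = qPochInf q (a * z) / qPochInf q z := by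
    field_simp
    linear_combination heq
  exact this

/-! ### Factorization of sums over `Fin M → ℕ` -/

lemma summable_pi_prod {M : ℕ} (g : Fin M → ℕ → ℝ) (h0 : ∀ i k, 0 ≤ g i k)
    (hg : ∀ i, Summable (g i)) :
    Summable (fun m : Fin M → ℕ => ∏ i, g i (m i)) := by
  induction M with
  | zero =>
    have : (fun m : Fin 0 → ℕ => ∏ i, g i (m i)) = fun _ => 1 := by
      funext m; simp
    rw [this]
    exact .of_finite
  | succ M ih =>
    have ih' := ih (fun i => g i.succ) (fun i k => h0 _ _) (fun i => hg _)
    have key := Summable.mul_of_nonneg (hg 0) ih' (fun k => h0 0 k)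
      (fun m => Finset.prod_nonneg fun i _ => h0 _ _)
    rw [← (Fin.consEquiv (fun _ : Fin (M + 1) => ℕ)).summable_iff]
    apply key.congr
    intro p
    simp only [Function.comp, Fin.consEquiv_apply]
    rw [Fin.prod_univ_succ]
    simp [Fin.cons_zero, Fin.cons_succ]

lemma tsum_pi_prod {M : ℕ} (g : Fin M → ℕ → ℂ) (hg : ∀ i, Summable (fun k => ‖g i k‖)) :
    ∑' m : Fin M → ℕ, ∏ i, g i (m i) = ∏ i, ∑' k, g i k := by
  induction M with
  | zero =>
    have : (fun m : Fin 0 → ℕ => ∏ i, g i (m i)) = fun _ => 1 := by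
      funext m; simp
    rw [this, Finset.univ_eq_empty, Finset.prod_empty, tsum_eq_single (fun i => i.elim0)]
    intro b hb
    exact absurd (funext fun i => i.elim0) hb
  | succ M ih =>
    have hnorm : Summable (fun m : Fin M → ℕ => ‖∏ i : Fin M, g i.succ (m i)‖) := by
      apply Summable.congr (summable_pi_prod (fun i k => ‖g i.succ k‖)
        (fun i k => norm_nonneg _) (fun i => hg _))
      intro m
      rw [norm_prod]
    rw [← (Fin.consEquiv (fun _ : Fin (M + 1) => ℕ)).tsum_eq
      (f := fun m : Fin (M + 1) → ℕ => ∏ i, g i (m i))]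
    have step : ∀ p : ℕ × (Fin M → ℕ),
        (∏ i, g i ((Fin.consEquiv (fun _ : Fin (M + 1) => ℕ)) p i))
          = g 0 p.1 * ∏ i : Fin M, g i.succ (p.2 i) := by
      intro p
      simp only [Fin.consEquiv_apply]
      rw [Fin.prod_univ_succ]
      simp [Fin.cons_zero, Fin.cons_succ]
    rw [tsum_congr step, ← tsum_mul_tsum_of_summable_norm (hg 0) hnorm,
      ih (fun i => g i.succ) (fun i => hg _), Fin.prod_univ_succ]

/-! ### Main theorem -/

theorem statement1 (M N : ℕ) (q : ℂ) (x a : Fin M → ℂ) (y b : Fin N → ℂ)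
    (hq : ‖q‖ < 1)
    (hx : ∀ i, ‖x i‖ < 1) (hy : ∀ j, ‖y j‖ < 1)
    (hax : ∀ i n, qPoch q (a i * x i) n ≠ 0)
    (hxinf : ∀ i, qPochInf q (x i) ≠ 0)
    (hsum : Summable (fun p : (Fin M → ℕ) × (Fin N → ℕ) =>
      ‖((∏ i, qPoch q (a i) (p.1 i) / qPoch q q (p.1 i) * x i ^ p.1 i) *
        (∏ j, qPoch q (b j) (p.2 j) / qPoch q q (p.2 j) * y j ^ p.2 j) *
        q ^ ((∑ i, p.1 i) * (∑ j, p.2 j)))‖)) :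
    (∑' p : (Fin M → ℕ) × (Fin N → ℕ),
        (∏ i, qPoch q (a i) (p.1 i) / qPoch q q (p.1 i) * x i ^ p.1 i) *
          (∏ j, qPoch q (b j) (p.2 j) / qPoch q q (p.2 j) * y j ^ p.2 j) *
          q ^ ((∑ i, p.1 i) * (∑ j, p.2 j)))
      = (∏ i, qPochInf q (a i * x i) / qPochInf q (x i)) *
        qHyperF q x b (fun i => a i * x i) y := by
  classical
  set F : (Fin M → ℕ) × (Fin N → ℕ) → ℂ := fun p =>
    (∏ i, qPoch q (a i) (p.1 i) / qPoch q q (p.1 i) * x i ^ p.1 i) *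
      (∏ j, qPoch q (b j) (p.2 j) / qPoch q q (p.2 j) * y j ^ p.2 j) *
      q ^ ((∑ i, p.1 i) * (∑ j, p.2 j)) with hF
  set D : ℂ := ∏ i, qPochInf q (a i * x i) / qPochInf q (x i) with hD
  have hFsum : Summable F := by
    apply Summable.of_norm
    apply hsum.congr
    intro p
    rfl
  -- swap the order of summation
  have hG : Summable (fun p : (Fin N → ℕ) × (Fin M → ℕ) => F p.swap) := hFsum.prod_symm
  have hswap : (∑' p : (Fin M → ℕ) × (Fin N → ℕ), F p)
      = ∑' p : (Fin N → ℕ) × (Fin M → ℕ), F p.swap := by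
    exact ((Equiv.prodComm (Fin N → ℕ) (Fin M → ℕ)).tsum_eq F).symm
  have hdouble : (∑' p : (Fin N → ℕ) × (Fin M → ℕ), F p.swap)
      = ∑' n : Fin N → ℕ, ∑' m : Fin M → ℕ, F (m, n) := Summable.tsum_prod hG
  -- the inner sum, for fixed n
  have inner : ∀ n : Fin N → ℕ, (∑' m : Fin M → ℕ, F (m, n))
      = (∏ j, qPoch q (b j) (n j) / qPoch q q (n j) * y j ^ n j) *
          (D * ∏ i, qPoch q (x i) (∑ j, n j) / qPoch q (a i * x i) (∑ j, n j)) := by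
    intro n
    set s : ℕ := ∑ j, n j with hs
    have hqs : ‖(q ^ s)‖ ≤ 1 := by
      rw [norm_pow]; exact pow_le_one₀ (norm_nonneg q) hq.le
    have hxq : ∀ i, ‖(x i * q ^ s)‖ < 1 := by
      intro i
      rw [norm_mul]
      calc ‖(x i)‖ * ‖(q ^ s)‖ ≤ ‖(x i)‖ * 1 :=
            mul_le_mul_of_nonneg_left hqs (norm_nonneg _)
        _ = ‖(x i)‖ := mul_one _
        _ < 1 := hx i
    -- rewrite the summand
    have hpt : ∀ m : Fin M → ℕ, F (m, n)
        = (∏ j, qPoch q (b j) (n j) / qPoch q q (n j) * y j ^ n j) *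
            ∏ i, (qPoch q (a i) (m i) / qPoch q q (m i) * (x i * q ^ s) ^ m i) := by
      intro m
      have e1 : ∏ i, (qPoch q (a i) (m i) / qPoch q q (m i) * (x i * q ^ s) ^ m i)
          = (∏ i, qPoch q (a i) (m i) / qPoch q q (m i) * x i ^ m i)
              * q ^ ((∑ i, m i) * s) := by
        calc ∏ i, (qPoch q (a i) (m i) / qPoch q q (m i) * (x i * q ^ s) ^ m i)
            = ∏ i, ((qPoch q (a i) (m i) / qPoch q q (m i) * x i ^ m i) * (q ^ s) ^ m i) :=
              Finset.prod_congr rfl (fun i _ => by rw [mul_pow]; ring)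
          _ = (∏ i, qPoch q (a i) (m i) / qPoch q q (m i) * x i ^ m i)
                * ∏ i, (q ^ s) ^ m i := Finset.prod_mul_distrib
          _ = (∏ i, qPoch q (a i) (m i) / qPoch q q (m i) * x i ^ m i)
                * q ^ ((∑ i, m i) * s) := by
              rw [Finset.prod_pow_eq_pow_sum, ← pow_mul, mul_comm s]
      rw [hF]
      simp only
      rw [e1]
      ring
    rw [tsum_congr hpt, tsum_mul_left]
    congr 1
    -- factor the sum over m
    rw [tsum_pi_prod (fun i k => qPoch q (a i) k / qPoch q q k * (x i * q ^ s) ^ k)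
      (fun i => qbin_summable hq (a i) (hxq i))]
    -- evaluate each factor via the q-binomial theorem
    have hfac : ∀ i, (∑' k : ℕ, qPoch q (a i) k / qPoch q q k * (x i * q ^ s) ^ k)
        = (qPochInf q (a i * x i) / qPochInf q (x i)) *
            (qPoch q (x i) s / qPoch q (a i * x i) s) := by
      intro i
      have hne1 : ∀ k : ℕ, (1 : ℂ) - q ^ k * (a i * (x i * q ^ s)) ≠ 0 := by
        intro k
        rw [show q ^ k * (a i * (x i * q ^ s)) = q ^ (k + s) * (a i * x i) by
          rw [pow_add]; ring]
        exact factor_ne (hax i) (k + s)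
      rw [qbinom hq (a i) (hxq i) hne1]
      rw [show a i * (x i * q ^ s) = q ^ s * (a i * x i) by ring,
        show x i * q ^ s = q ^ s * x i by ring]
      have hsplit1 := qPochInf_split hq (fun k => factor_ne (hax i) k) s
        (c := a i * x i)
      have hsplit2 := qPochInf_split hq
        (fun k => one_sub_ne (abs_qpow_mul_lt hq (hx i) k)) s (c := x i)
      have hP : qPoch q (a i * x i) s ≠ 0 := hax i s
      have hQ : qPoch q (x i) s ≠ 0 := qPoch_ne_of_abs_lt hq (hx i) s
      have hB : qPochInf q (q ^ s * x i) ≠ 0 := by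
        apply qPochInf_ne hq
        intro k
        rw [show q ^ k * (q ^ s * x i) = q ^ (k + s) * x i by rw [pow_add]; ring]
        exact one_sub_ne (abs_qpow_mul_lt hq (hx i) (k + s))
      rw [hsplit1, hsplit2]
      field_simp
    rw [Finset.prod_congr rfl (fun i _ => hfac i), Finset.prod_mul_distrib, hD]
  -- assemble
  rw [hswap, hdouble, tsum_congr inner]
  have final : ∀ n : Fin N → ℕ,
      (∏ j, qPoch q (b j) (n j) / qPoch q q (n j) * y j ^ n j) *
        (D * ∏ i, qPoch q (x i) (∑ j, n j) / qPoch q (a i * x i) (∑ j, n j))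
      = D * ((∏ i, qPoch q (x i) (∑ j, n j) / qPoch q (a i * x i) (∑ j, n j)) *
          (∏ j, qPoch q (b j) (n j) / qPoch q q (n j)) * ∏ j, y j ^ n j) := by
    intro n
    rw [show (∏ j, qPoch q (b j) (n j) / qPoch q q (n j) * y j ^ n j)
        = (∏ j, qPoch q (b j) (n j) / qPoch q q (n j)) * ∏ j, y j ^ n j from
      Finset.prod_mul_distrib]
    ring
  rw [tsum_congr final, tsum_mul_left]
  rfl
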